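/- Fix ν ∈ ℕ₀ and for m ∈ ℤ define the complex-valued functions Φ_m(ω) = √2 (iω−1)^m/(iω+1)^{m+1} on ℝ (negative integer exponents interpreted as reciprocals of positive powers), and for 0 ≤ m ≤ ν define Ψ⁰_{m,ν}(ω) = (1/√2)(ν!/√((2ν)!)) ∑_{k=0}^{ν+1} C(ν+1,k)(−1)^k Φ_{−ν−1+m+k}(ω). Then for every m with 0 ≤ m ≤ ν and every ω ∈ ℝ one has Ψ⁰_{ν−m,ν}(ω) = (−1)^ν · conj(Ψ⁰_{m,ν}(ω)). -/

import Mathlib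

open Real Finset Complex

/-- Fourier transforms of the Laguerre functions:
`Φ_m(ω) = √2 (iω−1)^m/(iω+1)^{m+1}`, `m ∈ ℤ` (integer powers). -/
noncomputable def lagFT (m : ℤ) (ω : ℝ) : ℂ :=
  (Real.sqrt 2 : ℂ) * (Complex.I * ω - 1) ^ m / (Complex.I * ω + 1) ^ (m + 1)

/-- The Fourier transform of the null-space Matérn–Laguerre function `ψ⁰_{m,ν}`. -/
noncomputable def psiNullFT (ν m : ℕ) (ω : ℝ) : ℂ :=
  ((1 / Real.sqrt 2 : ℝ) : ℂ) *
    (((Nat.factorial ν : ℝ) / Real.sqrt (Nat.factorial (2 * ν)) : ℝ) : ℂ) *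
    ∑ k ∈ Finset.range (ν + 2),
      (Nat.choose (ν + 1) k : ℂ) * (-1) ^ k * lagFT (-(ν : ℤ) - 1 + (m : ℤ) + (k : ℤ)) ω

lemma hb_ne (ω : ℝ) : (Complex.I * ω - 1) ≠ 0 := by
  intro h
  have := congrArg Complex.re h
  simp [Complex.mul_re] at this

lemma ha_ne (ω : ℝ) : (Complex.I * ω + 1) ≠ 0 := by
  intro h
  have := congrArg Complex.re h
  simp [Complex.mul_re] at this

lemma conj_lagFT (n : ℤ) (ω : ℝ) :
    (starRingEnd ℂ) (lagFT n ω) = -lagFT (-n - 1) ω := by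
  have ha := ha_ne ω
  have hb := hb_ne ω
  unfold lagFT
  rw [map_div₀, map_mul, map_zpow₀, map_zpow₀]
  have h1 : (starRingEnd ℂ) (Complex.I * ω - 1) = -(Complex.I * ω + 1) := by
    simp [Complex.ext_iff]
  have h2 : (starRingEnd ℂ) (Complex.I * ω + 1) = -(Complex.I * ω - 1) := by
    simp [Complex.ext_iff]
  rw [h1, h2, Complex.conj_ofReal]
  rw [neg_eq_neg_one_mul (Complex.I * ω + 1), neg_eq_neg_one_mul (Complex.I * (ω:ℂ) - 1), mul_zpow, mul_zpow]
  have hm1 : ((-1 : ℂ)) ^ n ≠ 0 := by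
    apply zpow_ne_zero; norm_num
  have : (-n - 1 : ℤ) + 1 = -n := by ring
  rw [this]
  have e : (-n - 1 : ℤ) = -(n + 1) := by ring
  rw [e, zpow_neg, zpow_add_one₀ (by norm_num : (-1:ℂ) ≠ 0)]
  have han : (Complex.I * ω + 1) ^ n ≠ 0 := zpow_ne_zero _ ha
  have hbn : (Complex.I * ω - 1) ^ (n+1) ≠ 0 := zpow_ne_zero _ hb
  field_simp
  ring_nf
  rw [← zpow_add₀ (by rw [add_comm]; exact ha)]
  simp

/-- Fourier-domain null-space symmetry: `Ψ⁰_{ν−m,ν}(ω) = (−1)^ν conj(Ψ⁰_{m,ν}(ω))`. -/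
theorem psiNullFT_conj_symmetry (ν m : ℕ) (hm : m ≤ ν) (ω : ℝ) :
    psiNullFT ν (ν - m) ω = (-1) ^ ν * (starRingEnd ℂ) (psiNullFT ν m ω) := by
  unfold psiNullFT
  rw [map_mul, map_mul, map_sum]
  simp only [map_mul, map_pow, map_neg, map_one, Complex.conj_ofReal, conj_lagFT,
    map_natCast]
  rw [← Finset.sum_range_reflect
    (fun k => (Nat.choose (ν+1) k : ℂ) * (-1)^k *
      lagFT (-(ν:ℤ) - 1 + ((ν - m : ℕ) : ℤ) + (k : ℤ)) ω)]
  rw [Finset.mul_sum, Finset.mul_sum, Finset.mul_sum]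
  refine Finset.sum_congr rfl fun k hk => ?_
  have hk' : k ≤ ν + 1 := by
    have := Finset.mem_range.mp hk; omega

  have hrefl : ν + 2 - 1 - k = ν + 1 - k := by omega
  rw [hrefl]
  have hch : ((ν+1).choose (ν+1-k) : ℂ) = ((ν+1).choose k : ℂ) := by
    rw [Nat.choose_symm hk']
  have hexp : (-(ν:ℤ) - 1 + ((ν - m : ℕ) : ℤ) + ((ν + 1 - k : ℕ) : ℤ))
      = -(-(ν:ℤ) - 1 + (m:ℤ) + (k:ℤ)) - 1 := by
    push_cast [hm, hk']
    ring
  have hsgn : ((-1:ℂ))^(ν+1-k) = (-1)^(ν+1) * (-1)^k := by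
    have h1 : ν + 1 + k = (ν + 1 - k) + 2 * k := by omega
    have : ((-1:ℂ))^(ν+1) * (-1)^k = (-1)^(ν+1+k) := (pow_add _ _ _).symm
    rw [this, h1, pow_add, pow_mul]
    norm_num
  rw [hch, hexp, hsgn]
  ring
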